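/- arXiv:2108.05201 — 2 statements merged into one kernel-verified Lean document; each statement's English description precedes it below -/
import Mathlib

section
/- Let γ denote the Euler–Mascheroni constant. For every ρ_0 ∈ (0,1), every λ > 0, and every t_0 ≥ e^{1-γ} e^{2/ρ_0}, the function f_1(ρ) = -1/(λ² t_0^{ρ+1} Γ(-ρ)) satisfies f_1'(ρ) ≤ -1/(λ² t_0^{ρ+1}) for all ρ ∈ [ρ_0, 1). -/
open Real Set

private lemma gamma_diff {x : ℝ} (hx : 0 < x) : DifferentiableAt ℝ Real.Gamma x :=
  Real.differentiableAt_Gamma fun m ↦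
    ne_of_gt (lt_of_le_of_lt (neg_nonpos.mpr (Nat.cast_nonneg m)) hx)

private lemma psi_two : deriv Real.Gamma 2 / Real.Gamma 2 = 1 - Real.eulerMascheroniConstant := by
  have h := Real.deriv_Gamma_nat 1
  norm_num [harmonic_succ] at h
  rw [h, Real.Gamma_two]
  ring

set_option maxHeartbeats 1000000 in
/-- Let `γ` be the Euler–Mascheroni constant. For every `ρ₀ ∈ (0,1)`, `λ > 0` and
`t₀ ≥ e^{1-γ} e^{2/ρ₀}`, the function `f₁(ρ) = -1/(λ² t₀^{ρ+1} Γ(-ρ))` satisfies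
`f₁'(ρ) ≤ -1/(λ² t₀^{ρ+1})` for all `ρ ∈ [ρ₀, 1)`. -/
theorem statement10 (ρ₀ : ℝ) (hρ₀ : ρ₀ ∈ Set.Ioo (0 : ℝ) 1) (lam : ℝ) (hlam : 0 < lam)
    (t₀ : ℝ)
    (ht₀ : Real.exp (1 - Real.eulerMascheroniConstant) * Real.exp (2 / ρ₀) ≤ t₀)
    (f₁ : ℝ → ℝ)
    (hf₁ : f₁ = fun ρ : ℝ => -1 / (lam ^ 2 * t₀ ^ (ρ + 1) * Real.Gamma (-ρ)))
    (ρ : ℝ) (hρ : ρ ∈ Set.Ico ρ₀ 1) :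
    deriv f₁ ρ ≤ -1 / (lam ^ 2 * t₀ ^ (ρ + 1)) := by
  obtain ⟨hρ₀0, hρ₀1⟩ := hρ₀
  obtain ⟨hρl, hρu⟩ := hρ
  set γ := Real.eulerMascheroniConstant with hγ
  have hρ0 : 0 < ρ := lt_of_lt_of_le hρ₀0 hρl
  have ht₀0 : 0 < t₀ := lt_of_lt_of_le (by positivity) ht₀
  set A := Real.Gamma (2 - ρ) with hA_def
  set A' := deriv Real.Gamma (2 - ρ) with hA'_def
  set T := t₀ ^ (ρ + 1) with hT_def
  set L := Real.log t₀ with hL_def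
  set D := ρ * (1 - ρ) with hD_def
  have hT0 : 0 < T := Real.rpow_pos_of_pos ht₀0 _
  have hA0 : 0 < A := Real.Gamma_pos_of_pos (by linarith)
  have hD0 : 0 < D := mul_pos hρ0 (by linarith)
  -- Gamma = Gamma(x+2)/(x(x+1)) on Ioo (-1) 0
  have hrep : ∀ x ∈ Set.Ioo (-1:ℝ) 0, Real.Gamma x = Real.Gamma (x + 2) / (x * (x + 1)) := by
    intro x hx
    have hx0 : x ≠ 0 := ne_of_lt hx.2
    have hx1 : x + 1 ≠ 0 := by have := hx.1; intro h; linarith [h]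
    have h1 : Real.Gamma (x + 1) = x * Real.Gamma x := Real.Gamma_add_one hx0
    have h2 : Real.Gamma (x + 1 + 1) = (x + 1) * Real.Gamma (x + 1) := Real.Gamma_add_one hx1
    rw [show x + 2 = x + 1 + 1 by ring, h2, h1]
    field_simp
  have hmemρ : -ρ ∈ Set.Ioo (-1:ℝ) 0 := ⟨by linarith, by linarith⟩
  have hG : Real.Gamma (-ρ) = -(A / D) := by
    have h := hrep (-ρ) hmemρ
    rw [show -ρ + 2 = 2 - ρ by ring, ← hA_def] at h
    rw [h, show -ρ * (-ρ + 1) = -D by rw [hD_def]; ring, div_neg]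
  -- derivative of Gamma at -ρ
  have hU : HasDerivAt (fun x : ℝ => Real.Gamma (x + 2)) A' (-ρ) := by
    have hd : HasDerivAt Real.Gamma A' (-ρ + 2) := by
      rw [show -ρ + 2 = 2 - ρ by ring]
      exact (gamma_diff (by linarith)).hasDerivAt
    have := hd.comp (-ρ) ((hasDerivAt_id (-ρ)).add_const 2)
    exact this.congr_deriv (mul_one _)
  have hV : HasDerivAt (fun x : ℝ => x * (x + 1)) (1 - 2 * ρ) (-ρ) := by
    have := (hasDerivAt_id (-ρ)).mul ((hasDerivAt_id (-ρ)).add_const 1)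
    simp only [id_eq, one_mul, mul_one] at this
    exact this.congr_deriv (by ring)
  have hVne : (-ρ) * (-ρ + 1) ≠ 0 :=
    ne_of_lt (mul_neg_of_neg_of_pos (by linarith) (by linarith))
  set g' := (-(A' * D) - A * (1 - 2 * ρ)) / D ^ 2 with hg'_def
  have hquot : HasDerivAt (fun x : ℝ => Real.Gamma (x + 2) / (x * (x + 1))) g' (-ρ) := by
    have h := hU.div hV hVne
    rw [show -ρ + 2 = 2 - ρ by ring, ← hA_def] at h
    refine h.congr_deriv ?_
    rw [hg'_def, show -ρ * (-ρ + 1) = -D by rw [hD_def]; ring]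
    field_simp
    try ring
  have hGamma' : HasDerivAt Real.Gamma g' (-ρ) := by
    apply hquot.congr_of_eventuallyEq
    filter_upwards [Ioo_mem_nhds hmemρ.1 hmemρ.2] with x hx using hrep x hx
  -- derivative of the full denominator
  have hrpow : HasDerivAt (fun x : ℝ => t₀ ^ (x + 1)) (T * L) ρ := by
    have hb : HasDerivAt (fun x : ℝ => t₀ ^ x) (t₀ ^ (ρ + 1) * Real.log t₀) (ρ + 1) :=
      (Real.hasStrictDerivAt_const_rpow ht₀0 (ρ + 1)).hasDerivAt
    have := hb.comp ρ ((hasDerivAt_id ρ).add_const 1)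
    exact this.congr_deriv (mul_one _)
  have hGneg : HasDerivAt (fun x : ℝ => Real.Gamma (-x)) (-g') ρ := by
    have := hGamma'.comp ρ (hasDerivAt_neg ρ)
    simpa [Function.comp_def, mul_comm] using this
  have hGne : Real.Gamma (-ρ) ≠ 0 := by
    rw [hG]
    exact neg_ne_zero.mpr (ne_of_gt (div_pos hA0 hD0))
  have hPne : lam ^ 2 * T * Real.Gamma (-ρ) ≠ 0 :=
    mul_ne_zero (mul_ne_zero (by positivity) (ne_of_gt hT0)) hGne
  set P' := (0 * T + lam ^ 2 * (T * L)) * Real.Gamma (-ρ) + lam ^ 2 * T * -g' with hP'_def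
  have hP : HasDerivAt (fun x : ℝ => lam ^ 2 * t₀ ^ (x + 1) * Real.Gamma (-x)) P' ρ :=
    ((hasDerivAt_const ρ (lam ^ 2)).mul hrpow).mul hGneg
  have hf₁' : HasDerivAt f₁ ((0 * (lam ^ 2 * T * Real.Gamma (-ρ)) - (-1) * P') /
      (lam ^ 2 * T * Real.Gamma (-ρ)) ^ 2) ρ := by
    rw [hf₁]
    exact (hasDerivAt_const ρ (-1)).div hP hPne
  rw [hf₁'.deriv]
  -- analytic bounds
  have hc := Real.convexOn_log_Gamma
  have hA1 : A ≤ 1 := by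
    have h := hc.2 (show (1:ℝ) ∈ Ioi 0 by norm_num) (show (2:ℝ) ∈ Ioi 0 by norm_num)
      (le_of_lt hρ0) (by linarith : (0:ℝ) ≤ 1 - ρ) (by ring)
    simp only [smul_eq_mul, Function.comp_apply, Real.Gamma_one, Real.Gamma_two, Real.log_one,
      mul_zero, add_zero, mul_one] at h
    have h2 : Real.log A ≤ 0 := by
      rw [hA_def]
      rw [show (2:ℝ) - ρ = ρ + (1 - ρ) * 2 by ring]
      exact h
    exact (Real.log_nonpos_iff hA0.le).mp h2
  have hΨ : A' ≤ (1 - γ) * A := by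
    have hdiff : ∀ x ∈ Ioi (0:ℝ), DifferentiableAt ℝ (Real.log ∘ Real.Gamma) x := fun x hx =>
      (gamma_diff hx).log (Real.Gamma_ne_zero fun m => ne_of_gt
        (lt_of_le_of_lt (neg_nonpos.mpr (Nat.cast_nonneg m)) hx))
    have hmono := hc.monotoneOn_deriv hdiff
    have h1 := hmono (show (2:ℝ) - ρ ∈ Ioi 0 by rw [mem_Ioi]; linarith)
      (show (2:ℝ) ∈ Ioi 0 by norm_num) (by linarith)
    have e1 : deriv (Real.log ∘ Real.Gamma) (2 - ρ) = A' / A := by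
      rw [Function.comp_def, deriv.log (gamma_diff (by linarith)) (ne_of_gt hA0)]
    have e2 : deriv (Real.log ∘ Real.Gamma) 2 = 1 - γ := by
      rw [Function.comp_def,
        deriv.log (gamma_diff (by norm_num)) (by rw [Real.Gamma_two]; norm_num)]
      exact psi_two
    rw [e1, e2] at h1
    calc A' = A' / A * A := by field_simp
    _ ≤ (1 - γ) * A := mul_le_mul_of_nonneg_right h1 (le_of_lt hA0)
  have hLρ : (1 - γ) * ρ + 2 ≤ ρ * L := by
    have hL2 : (1 - γ + 2 / ρ₀) ≤ L := by
      rw [hL_def, Real.le_log_iff_exp_le ht₀0, Real.exp_add]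
      exact ht₀
    have h2 : 2 / ρ ≤ 2 / ρ₀ := by gcongr
    have hL3 : 1 - γ + 2 / ρ ≤ L := by linarith
    have := mul_le_mul_of_nonneg_left hL3 (le_of_lt hρ0)
    calc (1 - γ) * ρ + 2 = ρ * (1 - γ + 2 / ρ) := by field_simp
    _ ≤ ρ * L := this
  -- key inequality
  have key : A' * D + A * (1 - 2 * ρ) + A ^ 2 ≤ L * A * D := by
    have hAD : 0 ≤ A * (1 - ρ) := mul_nonneg hA0.le (by linarith)
    have h1 : ((1 - γ) * ρ + 2) * (A * (1 - ρ)) ≤ (ρ * L) * (A * (1 - ρ)) :=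
      mul_le_mul_of_nonneg_right hLρ hAD
    have h2 : A' * D ≤ (1 - γ) * A * D :=
      mul_le_mul_of_nonneg_right hΨ (le_of_lt hD0)
    rw [hD_def] at h2 ⊢
    nlinarith [mul_nonneg hA0.le (sub_nonneg.mpr hA1)]
  -- final algebra
  have eP' : P' = lam ^ 2 * T * ((A' * D + A * (1 - 2 * ρ) - L * A * D) / D ^ 2) := by
    rw [hP'_def, hG, hg'_def]
    have hDne : (D : ℝ) ≠ 0 := ne_of_gt hD0
    field_simp
    ring
  simp only [zero_mul, zero_sub, neg_mul, one_mul, neg_neg]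
  have hDne : (D : ℝ) ≠ 0 := ne_of_gt hD0
  have hnum : P' / (lam ^ 2 * T * Real.Gamma (-ρ)) ^ 2
      = (A' * D + A * (1 - 2 * ρ) - L * A * D) / (lam ^ 2 * T * A ^ 2) := by
    rw [eP', hG]
    field_simp
  rw [hnum, div_le_div_iff₀ (by positivity) (by positivity)]
  have hN : A' * D + A * (1 - 2 * ρ) - L * A * D ≤ -A ^ 2 := by linarith
  nlinarith [mul_le_mul_of_nonneg_right hN (le_of_lt (mul_pos (pow_pos hlam 2) hT0))]
end

section
/- Let a = 3π/4. For ρ ∈ (0,1), λ > 0, t_0 > 0 define f_{21}(ρ) = (a/(2π λ² t_0^{ρ+1})) ∫_{-1}^{1} e^{e^{ias}} e^{ias} e^{2iaρs} (e^{iaρs} + λ t_0^ρ)^{-1} ds (a complex integral over s ∈ [-1,1]). Then for every ρ_0 ∈ (0,1) and λ_1 > 0 there exist constants C > 0 and T_0 > 1 depending only on ρ_0 and λ_1 such that for all t_0 ≥ T_0, all λ ≥ λ_1, and all ρ ∈ [ρ_0, 1), f_{21} is differentiable at ρ and |f_{21}'(ρ)| ≤ C ln t_0 / (λ³ t_0^{2ρ+1}).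 -/
open MeasureTheory Complex

/-- The contribution of the circular-arc part of the Hankel contour `δ(1; 3πρ/4)` in the
integral representation of `t₀^{ρ-1} E_{ρ,ρ}(-λ t₀^ρ)`, with `a = 3π/4`:
`f₂₁(ρ) = (a/(2π λ² t₀^{ρ+1})) ∫_{-1}^{1} e^{e^{ias}} e^{ias} e^{2iaρs} (e^{iaρs} + λ t₀^ρ)⁻¹ ds`. -/
noncomputable def f21 (lam t₀ ρ : ℝ) : ℂ :=
  (((3 * Real.pi / 4) / (2 * Real.pi * lam ^ 2 * t₀ ^ (ρ + 1)) : ℝ) : ℂ) *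
    ∫ s in (-1 : ℝ)..1,
      Complex.exp (Complex.exp (Complex.I * ((3 * Real.pi / 4 : ℝ) : ℂ) * (s : ℂ))) *
        Complex.exp (Complex.I * ((3 * Real.pi / 4 : ℝ) : ℂ) * (s : ℂ)) *
        Complex.exp (2 * Complex.I * ((3 * Real.pi / 4 : ℝ) : ℂ) * (ρ : ℂ) * (s : ℂ)) /
        (Complex.exp (Complex.I * ((3 * Real.pi / 4 : ℝ) : ℂ) * (ρ : ℂ) * (s : ℂ)) +
          ((lam * t₀ ^ ρ : ℝ) : ℂ))

noncomputable def A3 (s : ℝ) : ℂ :=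
  Complex.exp (Complex.exp (Complex.I * ((3 * Real.pi / 4 : ℝ) : ℂ) * (s : ℂ))) *
    Complex.exp (Complex.I * ((3 * Real.pi / 4 : ℝ) : ℂ) * (s : ℂ))

noncomputable def DD (lam t₀ ρ s : ℝ) : ℂ :=
  Complex.exp (Complex.I * ((3 * Real.pi / 4 : ℝ) : ℂ) * (ρ : ℂ) * (s : ℂ)) +
    ((lam * t₀ ^ ρ : ℝ) : ℂ)

noncomputable def DD' (lam t₀ ρ s : ℝ) : ℂ :=
  Complex.I * ((3 * Real.pi / 4 : ℝ) : ℂ) * (s : ℂ) *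
    Complex.exp (Complex.I * ((3 * Real.pi / 4 : ℝ) : ℂ) * (ρ : ℂ) * (s : ℂ)) +
    ((lam * t₀ ^ ρ * Real.log t₀ : ℝ) : ℂ)

lemma norm_exp_Ias (a s : ℝ) : ‖Complex.exp (Complex.I * (a : ℂ) * (s : ℂ))‖ = 1 := by
  rw [Complex.norm_exp]; simp [Complex.mul_re]

lemma norm_exp_Iars (a ρ s : ℝ) : ‖Complex.exp (Complex.I * (a : ℂ) * (ρ : ℂ) * (s : ℂ))‖ = 1 := by
  rw [Complex.norm_exp]; simp [Complex.mul_re, Complex.mul_im]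

lemma norm_exp_2Iars (a ρ s : ℝ) :
    ‖Complex.exp (2 * Complex.I * (a : ℂ) * (ρ : ℂ) * (s : ℂ))‖ = 1 := by
  rw [Complex.norm_exp]; simp [Complex.mul_re, Complex.mul_im]

lemma norm_A3 (s : ℝ) : ‖A3 s‖ ≤ Real.exp 1 := by
  rw [A3, norm_mul, norm_exp_Ias, mul_one, Complex.norm_exp,
    Real.exp_le_exp, Complex.exp_re]
  have h1 : (Complex.I * ((3 * Real.pi / 4 : ℝ) : ℂ) * (s : ℂ)).re = 0 := by
    simp [Complex.mul_re]
  rw [h1]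
  simpa using Real.cos_le_one _

lemma DD_lower (lam t₀ ρ s : ℝ) (h2 : 2 ≤ lam * t₀ ^ ρ) :
    lam * t₀ ^ ρ / 2 ≤ ‖DD lam t₀ ρ s‖ := by
  have h := norm_sub_norm_le (((lam * t₀ ^ ρ : ℝ) : ℂ))
    (-(Complex.exp (Complex.I * ((3 * Real.pi / 4 : ℝ) : ℂ) * (ρ : ℂ) * (s : ℂ))))
  rw [sub_neg_eq_add, norm_neg, norm_exp_Iars] at h
  have hn : ‖((lam * t₀ ^ ρ : ℝ) : ℂ)‖ = lam * t₀ ^ ρ := by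
    rw [Complex.norm_real, Real.norm_eq_abs, _root_.abs_of_nonneg (by linarith)]
  rw [hn] at h
  have : DD lam t₀ ρ s = ((lam * t₀ ^ ρ : ℝ) : ℂ) +
      Complex.exp (Complex.I * ((3 * Real.pi / 4 : ℝ) : ℂ) * (ρ : ℂ) * (s : ℂ)) := by
    rw [DD]; ring
  rw [this]
  linarith

lemma DD_ne (lam t₀ ρ s : ℝ) (h2 : 2 ≤ lam * t₀ ^ ρ) : DD lam t₀ ρ s ≠ 0 := by
  intro h
  have := DD_lower lam t₀ ρ s h2
  rw [h, norm_zero] at this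
  linarith

lemma DD_upper (lam t₀ ρ s : ℝ) (h0 : 0 ≤ lam * t₀ ^ ρ) :
    ‖DD lam t₀ ρ s‖ ≤ 1 + lam * t₀ ^ ρ := by
  refine (norm_add_le _ _).trans ?_
  rw [norm_exp_Iars, Complex.norm_real, Real.norm_eq_abs, _root_.abs_of_nonneg h0]

lemma DD'_upper (lam t₀ ρ s : ℝ) (hs : |s| ≤ 1) (hL : 0 ≤ Real.log t₀)
    (h0 : 0 ≤ lam * t₀ ^ ρ) :
    ‖DD' lam t₀ ρ s‖ ≤ 3 * Real.pi / 4 + lam * t₀ ^ ρ * Real.log t₀ := by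
  refine (norm_add_le _ _).trans ?_
  have h1 : ‖Complex.I * ((3 * Real.pi / 4 : ℝ) : ℂ) * (s : ℂ) *
      Complex.exp (Complex.I * ((3 * Real.pi / 4 : ℝ) : ℂ) * (ρ : ℂ) * (s : ℂ))‖
      ≤ 3 * Real.pi / 4 := by
    rw [norm_mul, norm_exp_Iars, mul_one, norm_mul, norm_mul]
    simp only [Complex.norm_I, one_mul, Complex.norm_real, Real.norm_eq_abs]
    have ha : |3 * Real.pi / 4| = 3 * Real.pi / 4 := _root_.abs_of_nonneg (by positivity)
    rw [ha]
    calc 3 * Real.pi / 4 * |s| ≤ 3 * Real.pi / 4 * 1 := by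
          exact mul_le_mul_of_nonneg_left hs (by positivity)
      _ = 3 * Real.pi / 4 := by ring
  have h2 : ‖((lam * t₀ ^ ρ * Real.log t₀ : ℝ) : ℂ)‖ = lam * t₀ ^ ρ * Real.log t₀ := by
    rw [Complex.norm_real, Real.norm_eq_abs, _root_.abs_of_nonneg (by positivity)]
  linarith

noncomputable def GG (lam t₀ ρ s : ℝ) : ℂ :=
  Complex.exp (Complex.exp (Complex.I * ((3 * Real.pi / 4 : ℝ) : ℂ) * (s : ℂ))) *
    Complex.exp (Complex.I * ((3 * Real.pi / 4 : ℝ) : ℂ) * (s : ℂ)) *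
    Complex.exp (2 * Complex.I * ((3 * Real.pi / 4 : ℝ) : ℂ) * (ρ : ℂ) * (s : ℂ)) /
    (Complex.exp (Complex.I * ((3 * Real.pi / 4 : ℝ) : ℂ) * (ρ : ℂ) * (s : ℂ)) +
      ((lam * t₀ ^ ρ : ℝ) : ℂ))

noncomputable def GG' (lam t₀ ρ s : ℝ) : ℂ :=
  (A3 s * (2 * Complex.I * ((3 * Real.pi / 4 : ℝ) : ℂ) * (s : ℂ) *
      Complex.exp (2 * Complex.I * ((3 * Real.pi / 4 : ℝ) : ℂ) * (ρ : ℂ) * (s : ℂ))) *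
      DD lam t₀ ρ s -
    A3 s * Complex.exp (2 * Complex.I * ((3 * Real.pi / 4 : ℝ) : ℂ) * (ρ : ℂ) * (s : ℂ)) *
      DD' lam t₀ ρ s) / (DD lam t₀ ρ s) ^ 2

lemma GG_eq (lam t₀ ρ s : ℝ) : GG lam t₀ ρ s =
    A3 s * Complex.exp (2 * Complex.I * ((3 * Real.pi / 4 : ℝ) : ℂ) * (ρ : ℂ) * (s : ℂ)) /
      DD lam t₀ ρ s := rfl

lemma GG_norm (lam t₀ ρ s : ℝ) (h2 : 2 ≤ lam * t₀ ^ ρ) :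
    ‖GG lam t₀ ρ s‖ ≤ Real.exp 1 * (2 / (lam * t₀ ^ ρ)) := by
  rw [GG_eq, norm_div, norm_mul, norm_exp_2Iars, mul_one]
  have hD := DD_lower lam t₀ ρ s h2
  have hP : (0:ℝ) < lam * t₀ ^ ρ := by linarith
  have hDpos : (0:ℝ) < lam * t₀ ^ ρ / 2 := by linarith
  calc ‖A3 s‖ / ‖DD lam t₀ ρ s‖ ≤ Real.exp 1 / (lam * t₀ ^ ρ / 2) := by
        apply div_le_div₀ (Real.exp_pos 1).le (norm_A3 s) hDpos hD
    _ = Real.exp 1 * (2 / (lam * t₀ ^ ρ)) := by field_simp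

lemma GG'_norm (lam t₀ ρ s : ℝ) (hs : |s| ≤ 1) (h2 : 2 ≤ lam * t₀ ^ ρ)
    (hL : 1 ≤ Real.log t₀) :
    ‖GG' lam t₀ ρ s‖ ≤ 120 * Real.log t₀ / (lam * t₀ ^ ρ) := by
  set P := lam * t₀ ^ ρ with hP
  set L := Real.log t₀ with hLdef
  have hPpos : (0:ℝ) < P := by linarith
  have hD := DD_lower lam t₀ ρ s h2
  have hDu := DD_upper lam t₀ ρ s (by linarith)
  have hD' := DD'_upper lam t₀ ρ s hs (by linarith) (by linarith)
  rw [← hP] at hD hDu hD'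
  rw [← hLdef] at hD'
  have hA := norm_A3 s
  have he1 : (1:ℝ) ≤ Real.exp 1 := by linarith [Real.add_one_le_exp 1]
  have hc : ‖2 * Complex.I * ((3 * Real.pi / 4 : ℝ) : ℂ) * (s : ℂ) *
      Complex.exp (2 * Complex.I * ((3 * Real.pi / 4 : ℝ) : ℂ) * (ρ : ℂ) * (s : ℂ))‖
      ≤ 2 * (3 * Real.pi / 4) := by
    rw [norm_mul, norm_exp_2Iars, mul_one, norm_mul, norm_mul, norm_mul]
    simp only [Complex.norm_I, Complex.norm_real, Real.norm_eq_abs, mul_one]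
    have h2n : ‖(2:ℂ)‖ = 2 := by norm_num
    rw [h2n, _root_.abs_of_nonneg (by positivity : (0:ℝ) ≤ 3 * Real.pi / 4)]
    calc 2 * (3 * Real.pi / 4) * |s| ≤ 2 * (3 * Real.pi / 4) * 1 :=
          mul_le_mul_of_nonneg_left hs (by positivity)
      _ = 2 * (3 * Real.pi / 4) := by ring
  have hX : ‖A3 s * (2 * Complex.I * ((3 * Real.pi / 4 : ℝ) : ℂ) * (s : ℂ) *
      Complex.exp (2 * Complex.I * ((3 * Real.pi / 4 : ℝ) : ℂ) * (ρ : ℂ) * (s : ℂ))) *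
      DD lam t₀ ρ s‖ ≤ Real.exp 1 * (2 * (3 * Real.pi / 4)) * (1 + P) := by
    rw [norm_mul, norm_mul]
    exact mul_le_mul (mul_le_mul hA hc (norm_nonneg _) (Real.exp_pos 1).le) hDu
      (norm_nonneg _) (by positivity)
  have hY : ‖A3 s * Complex.exp (2 * Complex.I * ((3 * Real.pi / 4 : ℝ) : ℂ) * (ρ : ℂ) * (s : ℂ)) *
      DD' lam t₀ ρ s‖ ≤ Real.exp 1 * (3 * Real.pi / 4 + P * L) := by
    rw [norm_mul, norm_mul, norm_exp_2Iars, mul_one]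
    exact mul_le_mul hA (by linarith) (norm_nonneg _) (Real.exp_pos 1).le
  rw [GG', norm_div, norm_pow]
  have hnum : ‖A3 s * (2 * Complex.I * ((3 * Real.pi / 4 : ℝ) : ℂ) * (s : ℂ) *
      Complex.exp (2 * Complex.I * ((3 * Real.pi / 4 : ℝ) : ℂ) * (ρ : ℂ) * (s : ℂ))) *
      DD lam t₀ ρ s -
      A3 s * Complex.exp (2 * Complex.I * ((3 * Real.pi / 4 : ℝ) : ℂ) * (ρ : ℂ) * (s : ℂ)) *
      DD' lam t₀ ρ s‖ ≤ Real.exp 1 * (2 * (3 * Real.pi / 4)) * (1 + P)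
        + Real.exp 1 * (3 * Real.pi / 4 + P * L) :=
    (norm_sub_le _ _).trans (by linarith)
  have hDsq_lb : (P / 2) ^ 2 ≤ ‖DD lam t₀ ρ s‖ ^ 2 := by
    apply pow_le_pow_left₀ (by positivity) hD
  have hpi : Real.pi ≤ 3.15 := by linarith [Real.pi_lt_d2]
  have hexp : Real.exp 1 ≤ 2.7182818286 := le_of_lt Real.exp_one_lt_d9
  refine le_trans (div_le_div₀ (by positivity) hnum (by positivity) hDsq_lb) ?_
  rw [div_le_div_iff₀ (by positivity) hPpos]
  have hPL : P ≤ P * L := le_mul_of_one_le_right hPpos.le hL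
  have hPPL : P * P ≤ P * P * L := le_mul_of_one_le_right (by positivity) hL
  have hPsq : 2 * P ≤ P * P := by nlinarith
  have hLpos : (0:ℝ) ≤ L := by linarith
  calc (Real.exp 1 * (2 * (3 * Real.pi / 4)) * (1 + P)
        + Real.exp 1 * (3 * Real.pi / 4 + P * L)) * P
      ≤ (2.7182818286 * (2 * (3 * 3.15 / 4)) * (1 + P)
        + 2.7182818286 * (3 * 3.15 / 4 + P * L)) * P := by
        have h1P : (0:ℝ) ≤ 1 + P := by linarith
        have hPLn : (0:ℝ) ≤ P * L := by positivity
        gcongr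
    _ ≤ 120 * L * (P / 2) ^ 2 := by nlinarith [hPPL, hPsq, hPL, mul_pos hPpos hPpos]

lemma hasDerivAt_exp_mul (k : ℂ) (x : ℝ) :
    HasDerivAt (fun y : ℝ => Complex.exp (k * (y : ℂ))) (k * Complex.exp (k * (x : ℂ))) x := by
  have h : HasDerivAt (fun z : ℂ => Complex.exp (k * z)) (k * Complex.exp (k * (x : ℂ))) (x : ℂ) := by
    have := (Complex.hasDerivAt_exp (k * (x : ℂ))).comp (x : ℂ)
      ((hasDerivAt_id (x : ℂ)).const_mul k)
    exact this.congr_deriv (by ring)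
  exact h.comp_ofReal

lemma hasDerivAt_DD (lam t₀ s : ℝ) (h0 : 0 < t₀) (ρ : ℝ) :
    HasDerivAt (fun x : ℝ => DD lam t₀ x s) (DD' lam t₀ ρ s) ρ := by
  have h1 : HasDerivAt (fun x : ℝ =>
      Complex.exp (Complex.I * ((3 * Real.pi / 4 : ℝ) : ℂ) * (x : ℂ) * (s : ℂ)))
      (Complex.I * ((3 * Real.pi / 4 : ℝ) : ℂ) * (s : ℂ) *
        Complex.exp (Complex.I * ((3 * Real.pi / 4 : ℝ) : ℂ) * (ρ : ℂ) * (s : ℂ))) ρ := by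
    have := hasDerivAt_exp_mul (Complex.I * ((3 * Real.pi / 4 : ℝ) : ℂ) * (s : ℂ)) ρ
    convert this using 2 with y
    · congr 1; ring
    · congr 1; ring
  have h2 : HasDerivAt (fun x : ℝ => ((lam * t₀ ^ x : ℝ) : ℂ))
      ((lam * t₀ ^ ρ * Real.log t₀ : ℝ) : ℂ) ρ := by
    have hr : HasDerivAt (fun x : ℝ => lam * t₀ ^ x) (lam * t₀ ^ ρ * Real.log t₀) ρ := by
      have := ((Real.hasStrictDerivAt_const_rpow h0 ρ).hasDerivAt).const_mul lam
      simpa [mul_assoc] using this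
    exact hr.ofReal_comp
  exact h1.add h2

lemma hasDerivAt_GG (lam t₀ s : ℝ) (h0 : 0 < t₀) (ρ : ℝ) (hD : DD lam t₀ ρ s ≠ 0) :
    HasDerivAt (fun x : ℝ => GG lam t₀ x s) (GG' lam t₀ ρ s) ρ := by
  have hN : HasDerivAt (fun x : ℝ =>
      A3 s * Complex.exp (2 * Complex.I * ((3 * Real.pi / 4 : ℝ) : ℂ) * (x : ℂ) * (s : ℂ)))
      (A3 s * (2 * Complex.I * ((3 * Real.pi / 4 : ℝ) : ℂ) * (s : ℂ) *
        Complex.exp (2 * Complex.I * ((3 * Real.pi / 4 : ℝ) : ℂ) * (ρ : ℂ) * (s : ℂ)))) ρ := by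
    have h := (hasDerivAt_exp_mul (2 * Complex.I * ((3 * Real.pi / 4 : ℝ) : ℂ) * (s : ℂ)) ρ).const_mul (A3 s)
    convert h using 2 with y
    · congr 2
    · congr 2; ring
    · congr 2; ring
  exact hN.div (hasDerivAt_DD lam t₀ s h0 ρ) hD

lemma contDD (lam t₀ x : ℝ) : Continuous (fun s => DD lam t₀ x s) := by
  unfold DD; fun_prop

lemma measGG (lam t₀ x : ℝ) :
    AEStronglyMeasurable (fun s => GG lam t₀ x s) (volume.restrict (Set.uIoc (-1:ℝ) 1)) := by
  apply Measurable.aestronglyMeasurable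
  unfold GG
  apply Measurable.div <;> fun_prop

lemma measGG' (lam t₀ x : ℝ) :
    AEStronglyMeasurable (fun s => GG' lam t₀ x s) (volume.restrict (Set.uIoc (-1:ℝ) 1)) := by
  apply Measurable.aestronglyMeasurable
  unfold GG' A3 DD DD'
  apply Measurable.div <;> fun_prop

lemma contGG (lam t₀ x : ℝ) (h2 : 2 ≤ lam * t₀ ^ x) :
    Continuous (fun s => GG lam t₀ x s) := by
  unfold GG
  apply Continuous.div
  · fun_prop
  · have := contDD lam t₀ x
    unfold DD at this; exact this
  · intro s; exact DD_ne lam t₀ x s h2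

lemma hasDerivAt_FF (lam t₀ ρ ε : ℝ) (h0 : 0 < t₀) (hε : 0 < ε) (hL : 1 ≤ Real.log t₀)
    (hball : ∀ x ∈ Metric.ball ρ ε, 2 ≤ lam * t₀ ^ x) :
    HasDerivAt (fun x => ∫ s in (-1:ℝ)..1, GG lam t₀ x s)
      (∫ s in (-1:ℝ)..1, GG' lam t₀ ρ s) ρ := by
  have key := intervalIntegral.hasDerivAt_integral_of_dominated_loc_of_deriv_le
    (F := fun x s => GG lam t₀ x s) (F' := fun x s => GG' lam t₀ x s)
    (bound := fun _ => 60 * Real.log t₀) (a := (-1:ℝ)) (b := 1) (μ := volume) (s := Metric.ball ρ ε) (Metric.ball_mem_nhds ρ hε)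
    (Filter.Eventually.of_forall fun x => measGG lam t₀ x)
    ((contGG lam t₀ ρ (hball ρ (Metric.mem_ball_self hε))).intervalIntegrable _ _)
    (measGG' lam t₀ ρ)
    ?_ (intervalIntegrable_const) ?_
  · exact key.2
  · refine Filter.Eventually.of_forall fun s hs x hx => ?_
    have hsabs : |s| ≤ 1 := by
      rw [Set.uIoc_of_le (by norm_num : (-1:ℝ) ≤ 1)] at hs
      rw [abs_le]; exact ⟨hs.1.le, hs.2⟩
    have h2 := hball x hx
    calc ‖GG' lam t₀ x s‖ ≤ 120 * Real.log t₀ / (lam * t₀ ^ x) :=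
          GG'_norm lam t₀ x s hsabs h2 hL
      _ ≤ 60 * Real.log t₀ := by
          rw [div_le_iff₀ (by linarith)]
          nlinarith
  · refine Filter.Eventually.of_forall fun s hs x hx => ?_
    exact hasDerivAt_GG lam t₀ s h0 x (DD_ne lam t₀ x s (hball x hx))

lemma f21_eq (lam t₀ : ℝ) : f21 lam t₀ = fun ρ =>
    (((3 * Real.pi / 4) / (2 * Real.pi * lam ^ 2 * t₀ ^ (ρ + 1)) : ℝ) : ℂ) *
      ∫ s in (-1 : ℝ)..1, GG lam t₀ ρ s := rfl

lemma hasDerivAt_den (lam t₀ ρ : ℝ) (h0 : 0 < t₀) :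
    HasDerivAt (fun x : ℝ => 2 * Real.pi * lam ^ 2 * t₀ ^ (x + 1))
      (2 * Real.pi * lam ^ 2 * t₀ ^ (ρ + 1) * Real.log t₀) ρ := by
  have hr : HasDerivAt (fun x : ℝ => t₀ ^ (x + 1)) (t₀ ^ (ρ + 1) * Real.log t₀) ρ := by
    have h := ((Real.hasStrictDerivAt_const_rpow h0 (ρ + 1)).hasDerivAt).comp ρ
      ((hasDerivAt_id ρ).add_const 1)
    exact h.congr_deriv (by ring)
  have := hr.const_mul (2 * Real.pi * lam ^ 2)
  exact this.congr_deriv (by ring)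

/-- For every `ρ₀ ∈ (0,1)` and `λ₁ > 0` there exist `C > 0` and `T₀ > 1` such that for all
`t₀ ≥ T₀`, `λ ≥ λ₁` and `ρ ∈ [ρ₀, 1)`, `f₂₁` is differentiable at `ρ` and
`|f₂₁'(ρ)| ≤ C ln t₀ / (λ³ t₀^{2ρ+1})`. -/
theorem statement12 (ρ₀ : ℝ) (hρ₀ : ρ₀ ∈ Set.Ioo (0 : ℝ) 1) (lam₁ : ℝ) (hlam₁ : 0 < lam₁) :
    ∃ C : ℝ, 0 < C ∧ ∃ T₀ : ℝ, 1 < T₀ ∧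
      ∀ t₀ : ℝ, T₀ ≤ t₀ → ∀ lam : ℝ, lam₁ ≤ lam → ∀ ρ ∈ Set.Ico ρ₀ 1,
        DifferentiableAt ℝ (f21 lam t₀) ρ ∧
        ‖deriv (f21 lam t₀) ρ‖ ≤ C * Real.log t₀ / (lam ^ 3 * t₀ ^ (2 * ρ + 1)) := by
  obtain ⟨hρ₀0, hρ₀1⟩ := hρ₀
  refine ⟨1000, by norm_num, max (Real.exp 1) ((2 / lam₁ + 1) ^ (2 / ρ₀ : ℝ)), ?_, ?_⟩
  · exact lt_of_lt_of_le (by linarith [Real.add_one_le_exp 1]) (le_max_left _ _)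
  intro t₀ ht₀ lam hlam ρ hρ
  obtain ⟨hρl, hρu⟩ := hρ
  have hexpT : Real.exp 1 ≤ t₀ := le_trans (le_max_left _ _) ht₀
  have h0 : (0:ℝ) < t₀ := lt_of_lt_of_le (Real.exp_pos 1) hexpT
  have ht1 : (1:ℝ) ≤ t₀ := le_trans (by linarith [Real.add_one_le_exp 1]) hexpT
  have hlam0 : (0:ℝ) < lam := lt_of_lt_of_le hlam₁ hlam
  have hL : 1 ≤ Real.log t₀ := by
    have := Real.log_le_log (Real.exp_pos 1) hexpT
    rwa [Real.log_exp] at this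
  have hball : ∀ x ∈ Metric.ball ρ (ρ₀ / 2), 2 ≤ lam * t₀ ^ x := by
    intro x hx
    rw [Metric.mem_ball, Real.dist_eq, abs_lt] at hx
    have hx2 : ρ₀ / 2 ≤ x := by linarith
    have hbase : (0:ℝ) < 2 / lam₁ + 1 := by positivity
    have hT2 : (2 / lam₁ + 1) ^ (2 / ρ₀ : ℝ) ≤ t₀ := le_trans (le_max_right _ _) ht₀
    have h1 : (2 / lam₁ + 1 : ℝ) ≤ t₀ ^ (ρ₀ / 2 : ℝ) := by
      have hmono : ((2 / lam₁ + 1) ^ (2 / ρ₀ : ℝ)) ^ (ρ₀ / 2 : ℝ) ≤ t₀ ^ (ρ₀ / 2 : ℝ) :=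
        Real.rpow_le_rpow (by positivity) hT2 (by positivity)
      rwa [← Real.rpow_mul hbase.le, show (2 / ρ₀) * (ρ₀ / 2) = 1 by
        field_simp, Real.rpow_one] at hmono
    have h2 : t₀ ^ (ρ₀ / 2 : ℝ) ≤ t₀ ^ x := Real.rpow_le_rpow_of_exponent_le ht1 hx2
    have h3 : (2 / lam₁ + 1 : ℝ) ≤ t₀ ^ x := le_trans h1 h2
    have h4 : lam₁ * (2 / lam₁ + 1) ≤ lam * t₀ ^ x := by
      apply mul_le_mul hlam h3 (by positivity) hlam0.le
    have h5 : lam₁ * (2 / lam₁ + 1) = 2 + lam₁ := by field_simp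
    linarith [h4, h5 ▸ h4]
  have hP2 : 2 ≤ lam * t₀ ^ ρ := hball ρ (Metric.mem_ball_self (by linarith))
  have hPpos : (0:ℝ) < lam * t₀ ^ ρ := by linarith
  -- derivative of the coefficient
  have hdne : 2 * Real.pi * lam ^ 2 * t₀ ^ (ρ + 1) ≠ 0 := by positivity
  have hgc : HasDerivAt (fun x : ℝ => (3 * Real.pi / 4) / (2 * Real.pi * lam ^ 2 * t₀ ^ (x + 1)))
      ((0 * (2 * Real.pi * lam ^ 2 * t₀ ^ (ρ + 1)) -
        (3 * Real.pi / 4) * (2 * Real.pi * lam ^ 2 * t₀ ^ (ρ + 1) * Real.log t₀)) /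
        (2 * Real.pi * lam ^ 2 * t₀ ^ (ρ + 1)) ^ 2) ρ :=
    (hasDerivAt_const ρ (3 * Real.pi / 4)).div (hasDerivAt_den lam t₀ ρ h0) hdne
  have hFF := hasDerivAt_FF lam t₀ ρ (ρ₀ / 2) h0 (by linarith) hL hball
  have hf : HasDerivAt (f21 lam t₀)
      ((((0 * (2 * Real.pi * lam ^ 2 * t₀ ^ (ρ + 1)) -
        (3 * Real.pi / 4) * (2 * Real.pi * lam ^ 2 * t₀ ^ (ρ + 1) * Real.log t₀)) /
        (2 * Real.pi * lam ^ 2 * t₀ ^ (ρ + 1)) ^ 2 : ℝ) : ℂ) * (∫ s in (-1:ℝ)..1, GG lam t₀ ρ s)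
        + (((3 * Real.pi / 4) / (2 * Real.pi * lam ^ 2 * t₀ ^ (ρ + 1)) : ℝ) : ℂ) *
          ∫ s in (-1:ℝ)..1, GG' lam t₀ ρ s) ρ := by
    rw [f21_eq]
    exact (hgc.ofReal_comp).mul hFF
  refine ⟨hf.differentiableAt, ?_⟩
  rw [hf.deriv]
  -- now the estimate
  set d : ℝ := 2 * Real.pi * lam ^ 2 * t₀ ^ (ρ + 1) with hd
  have hdpos : (0:ℝ) < d := by positivity
  set P : ℝ := lam * t₀ ^ ρ with hPdef
  set L : ℝ := Real.log t₀ with hLdef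
  have hLpos : (0:ℝ) < L := by linarith
  have hFnorm : ‖∫ s in (-1:ℝ)..1, GG lam t₀ ρ s‖ ≤ Real.exp 1 * (2 / P) * 2 := by
    have := intervalIntegral.norm_integral_le_of_norm_le_const
      (C := Real.exp 1 * (2 / P)) (f := fun s => GG lam t₀ ρ s) (a := (-1:ℝ)) (b := 1) ?_
    · convert this using 2; norm_num
    · intro s hs
      exact GG_norm lam t₀ ρ s hP2
  have hF'norm : ‖∫ s in (-1:ℝ)..1, GG' lam t₀ ρ s‖ ≤ 120 * L / P * 2 := by
    have := intervalIntegral.norm_integral_le_of_norm_le_const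
      (C := 120 * L / P) (f := fun s => GG' lam t₀ ρ s) (a := (-1:ℝ)) (b := 1) ?_
    · convert this using 2; norm_num
    · intro s hs
      have hsabs : |s| ≤ 1 := by
        rw [Set.uIoc_of_le (by norm_num : (-1:ℝ) ≤ 1)] at hs
        rw [abs_le]; exact ⟨hs.1.le, hs.2⟩
      exact GG'_norm lam t₀ ρ s hsabs hP2 hL
  have hg'abs : ‖(((0 * d - (3 * Real.pi / 4) * (d * L)) / d ^ 2 : ℝ) : ℂ)‖
      = (3 * Real.pi / 4) * L / d := by
    rw [Complex.norm_real, Real.norm_eq_abs]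
    rw [zero_mul, zero_sub, abs_div, abs_neg, _root_.abs_of_nonneg (by positivity : (0:ℝ) ≤ (3 * Real.pi / 4) * (d * L)), _root_.abs_of_nonneg (by positivity : (0:ℝ) ≤ d ^ 2)]
    field_simp
  have hgabs : ‖(((3 * Real.pi / 4) / d : ℝ) : ℂ)‖ = (3 * Real.pi / 4) / d := by
    rw [Complex.norm_real, Real.norm_eq_abs, _root_.abs_of_nonneg (by positivity)]
  calc ‖_ + _‖ ≤ (3 * Real.pi / 4) * L / d * (Real.exp 1 * (2 / P) * 2)
        + (3 * Real.pi / 4) / d * (120 * L / P * 2) := by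
        refine (norm_add_le _ _).trans ?_
        gcongr
        · rw [norm_mul, hg'abs]
          exact mul_le_mul_of_nonneg_left hFnorm (by positivity)
        · rw [norm_mul, hgabs]
          exact mul_le_mul_of_nonneg_left hF'norm (by positivity)
    _ ≤ 1000 * L / (lam ^ 3 * t₀ ^ (2 * ρ + 1)) := by
        have ht : t₀ ^ (2 * ρ + 1 : ℝ) = t₀ ^ (ρ + 1 : ℝ) * t₀ ^ (ρ : ℝ) := by
          rw [← Real.rpow_add h0]; congr 1; ring
        have hQ : d * P = 2 * Real.pi * (lam ^ 3 * (t₀ ^ (ρ + 1 : ℝ) * t₀ ^ (ρ : ℝ))) := by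
          rw [hd, hPdef]; ring
        have hQpos : (0:ℝ) < lam ^ 3 * t₀ ^ (2 * ρ + 1 : ℝ) := by positivity
        have hexp : Real.exp 1 ≤ 2.7182818286 := le_of_lt Real.exp_one_lt_d9
        have hpipos := Real.pi_pos
        have expand : (3 * Real.pi / 4) * L / d * (Real.exp 1 * (2 / P) * 2)
            + (3 * Real.pi / 4) / d * (120 * L / P * 2)
            = (3 * Real.pi / 4) * L * (4 * Real.exp 1 + 240) / (d * P) := by
          field_simp
          ring
        rw [expand, hQ, ht]
        rw [div_le_div_iff₀ (by positivity) (by rw [ht] at hQpos; exact hQpos)]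
        have hQQ : (0:ℝ) < lam ^ 3 * (t₀ ^ (ρ + 1 : ℝ) * t₀ ^ (ρ : ℝ)) := by
          rw [ht] at hQpos; exact hQpos
        nlinarith [mul_le_mul_of_nonneg_right hexp
            (le_of_lt (mul_pos (mul_pos hpipos hLpos) hQQ)),
          mul_pos (mul_pos hpipos hLpos) hQQ]
end
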